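/- Let n ≥ 1, k ≥ 1, and for each multi-index I ∈ {0,…,n}^k with |I|_1 ≤ n−1 and each l ∈ {1,…,k} suppose functions q_I^l, p_I : S → ℚ on a set S ⊆ ℚ^k satisfy q_I^l(r) = Σ_{j=I_l+1}^{n−|I|_1+I_l} p_{(I_1,…,I_{l−1}, j, I_{l+1},…,I_k)}(r) · c_I^l(j) for nonzero constants c_I^l(j), and each q_I^l is a polynomial of total degree n−1−|I|_1 in r and of degree at most n−1−I_h in r_h for every h. Then for every J ∈ {0,…,n}^k with 1 ≤ |J|_1 ≤ n, p_J is a polynomial on S of total degree n−|J|_1 and of degree at most n−J_h in r_h for every h ∈ {1,…,k}. -/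

import Mathlib

/-- `f : ℚ^k → ℚ` restricted to `S` is a polynomial function of total degree at
most `D` and of degree at most `Dco h` in the `h`-th variable. -/
def IsPolyOn {k : ℕ} (S : Set (Fin k → ℚ)) (f : (Fin k → ℚ) → ℚ)
    (D : ℕ) (Dco : Fin k → ℕ) : Prop :=
  ∃ q : MvPolynomial (Fin k) ℚ,
    q.totalDegree ≤ D ∧ (∀ h : Fin k, q.degreeOf h ≤ Dco h) ∧
    ∀ r ∈ S, f r = MvPolynomial.eval r q

theorem stmt5 {k n : ℕ} (hn : 1 ≤ n) (hk : 1 ≤ k)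
    (S : Set (Fin k → ℚ))
    (p : (Fin k → ℕ) → (Fin k → ℚ) → ℚ)
    (q : (Fin k → ℕ) → Fin k → (Fin k → ℚ) → ℚ)
    (c : (Fin k → ℕ) → Fin k → ℕ → ℚ)
    (hc : ∀ I l j, c I l j ≠ 0)
    (hq : ∀ I : Fin k → ℕ, (∀ j, I j ≤ n) → (∑ j, I j) ≤ n - 1 → ∀ l : Fin k,
      ∀ r ∈ S, q I l r =
        ∑ j ∈ Finset.Icc (I l + 1) (n - (∑ j', I j') + I l),
          p (Function.update I l j) r * c I l j)
    (hqpoly : ∀ I : Fin k → ℕ, (∀ j, I j ≤ n) → (∑ j, I j) ≤ n - 1 → ∀ l : Fin k,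
      IsPolyOn S (q I l) (n - 1 - (∑ j, I j)) (fun h => n - 1 - I h)) :
    ∀ J : Fin k → ℕ, (∀ j, J j ≤ n) → 1 ≤ (∑ j, J j) → (∑ j, J j) ≤ n →
      IsPolyOn S (p J) (n - (∑ j, J j)) (fun h => n - J h) := by
  suffices H : ∀ m : ℕ, ∀ J : Fin k → ℕ, n - (∑ j, J j) < m → (∀ j, J j ≤ n) →
      1 ≤ (∑ j, J j) → (∑ j, J j) ≤ n →
      IsPolyOn S (p J) (n - (∑ j, J j)) (fun h => n - J h) by
    intro J h1 h2 h3
    exact H (n - (∑ j, J j) + 1) J (Nat.lt_succ_self _) h1 h2 h3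
  intro m
  induction m with
  | zero => intro J h; exact absurd h (Nat.not_lt_zero _)
  | succ m IH =>
    intro J hlt hJn hJ1 hJsum
    obtain ⟨l, -, hl⟩ : ∃ l ∈ Finset.univ, J l ≠ 0 :=
      Finset.exists_ne_zero_of_sum_ne_zero (by omega)
    set I : Fin k → ℕ := Function.update J l (J l - 1) with hI
    have hIl : I l = J l - 1 := Function.update_self l (J l - 1) J
    have hJJ : (∑ j, J j) = J l + ∑ j ∈ Finset.univ \ {l}, J j := by
      rw [← Finset.erase_eq]
      exact (Finset.add_sum_erase _ _ (Finset.mem_univ l)).symm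
    have hsdiff : ∑ j ∈ Finset.univ \ {l}, I j = ∑ j ∈ Finset.univ \ {l}, J j :=
      Finset.sum_congr rfl fun j' hj' =>
        Function.update_of_ne (by simpa using (Finset.mem_sdiff.1 hj').2) _ _
    have hIsum : (∑ j, I j) = (∑ j, J j) - 1 := by
      rw [hI, Finset.sum_update_of_mem (Finset.mem_univ l)]
      omega
    have hIco : ∀ j, I j ≤ n := by
      intro j
      rcases eq_or_ne j l with rfl | hjl
      · rw [hIl]; omega
      · rw [hI, Function.update_of_ne hjl]; exact hJn j
    have hIle : (∑ j, I j) ≤ n - 1 := by omega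
    have htop : n - (∑ j', I j') + I l = n - (∑ j, J j) + J l := by omega
    have hupd : Function.update I l (J l) = J := by
      rw [hI, Function.update_idem, Function.update_eq_self]
    have hsumupd : ∀ j, (∑ j', Function.update I l j j') = (∑ j, J j) - J l + j := by
      intro j
      rw [Finset.sum_update_of_mem (Finset.mem_univ l)]
      omega
    set T : ℕ := n - (∑ j, J j) + J l with hT
    set s : Finset ℕ := Finset.Icc (J l + 1) T with hs
    have hkey : ∀ r ∈ S, q I l r = p J r * c I l (J l) +
        ∑ j ∈ s, p (Function.update I l j) r * c I l j := by
      intro r hr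
      rw [hq I hIco hIle l r hr, htop]
      have h1 : I l + 1 = J l := by omega
      have hmem : J l ∈ Finset.Icc (J l) T := Finset.mem_Icc.2 ⟨le_rfl, by omega⟩
      rw [h1, ← Finset.add_sum_erase _ _ hmem, Finset.Icc_erase_left,
        ← Finset.Icc_add_one_left_eq_Ioc, hupd]
    -- induction hypothesis for each term in the remaining sum
    have hterm : ∀ j ∈ s,
        IsPolyOn S (p (Function.update I l j))
          (n - (∑ j', Function.update I l j j'))
          (fun h => n - Function.update I l j h) := by
      intro j hj
      rw [hs] at hj
      obtain ⟨hj1, hj2⟩ := Finset.mem_Icc.1 hj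
      have hs := hsumupd j
      refine IH _ (by omega) ?_ (by omega) (by omega)
      intro j'
      rcases eq_or_ne j' l with rfl | hj'l
      · rw [Function.update_self]; omega
      · rw [Function.update_of_ne hj'l]; exact hIco j'
    choose F hF1 hF2 hF3 using hterm
    obtain ⟨Q, hQ1, hQ2, hQ3⟩ := hqpoly I hIco hIle l
    refine ⟨MvPolynomial.C (c I l (J l))⁻¹ *
      (Q - ∑ j ∈ s.attach, MvPolynomial.C (c I l j.1) * F j.1 j.2), ?_, ?_, ?_⟩
    · -- total degree
      refine le_trans (MvPolynomial.totalDegree_mul _ _) ?_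
      rw [MvPolynomial.totalDegree_C, zero_add]
      refine le_trans (MvPolynomial.totalDegree_sub _ _) (max_le ?_ ?_)
      · exact le_trans hQ1 (by omega)
      · refine le_trans (MvPolynomial.totalDegree_finset_sum _ _) (Finset.sup_le ?_)
        intro j _
        refine le_trans (MvPolynomial.totalDegree_mul _ _) ?_
        rw [MvPolynomial.totalDegree_C, zero_add]
        refine le_trans (hF1 j.1 j.2) ?_
        have hj2 : J l + 1 ≤ j.1 ∧ j.1 ≤ T := Finset.mem_Icc.1 j.2
        have := hsumupd j.1
        omega
    · -- coordinate degrees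
      intro h
      refine le_trans (MvPolynomial.degreeOf_mul_le _ _ _) ?_
      rw [MvPolynomial.degreeOf_C, zero_add]
      refine le_trans (MvPolynomial.degreeOf_sub_le _ _ _) (max_le ?_ ?_)
      · refine le_trans (hQ2 h) ?_
        show n - 1 - I h ≤ n - J h
        rcases eq_or_ne h l with rfl | hhl
        · omega
        · have : I h = J h := Function.update_of_ne hhl _ _
          omega
      · refine le_trans (MvPolynomial.degreeOf_sum_le _ _ _) (Finset.sup_le ?_)
        intro j _
        refine le_trans (MvPolynomial.degreeOf_mul_le _ _ _) ?_
        rw [MvPolynomial.degreeOf_C, zero_add]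
        refine le_trans (hF2 j.1 j.2 h) ?_
        have hj2 : J l + 1 ≤ j.1 ∧ j.1 ≤ T := Finset.mem_Icc.1 j.2
        show n - Function.update I l j.1 h ≤ n - J h
        rcases eq_or_ne h l with rfl | hhl
        · have h1 : Function.update I h j.1 h = j.1 := Function.update_self _ _ _
          omega
        · have h1 : Function.update I l j.1 h = I h := Function.update_of_ne hhl _ _
          have h2 : I h = J h := Function.update_of_ne hhl _ _
          omega
    · -- evaluation
      intro r hr
      have e1 : MvPolynomial.eval r (MvPolynomial.C (c I l (J l))⁻¹ *
          (Q - ∑ j ∈ s.attach, MvPolynomial.C (c I l j.1) * F j.1 j.2)) =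
          (c I l (J l))⁻¹ *
          (q I l r - ∑ j ∈ s, p (Function.update I l j) r * c I l j) := by
        simp only [map_mul, map_sub, map_sum, MvPolynomial.eval_C]
        rw [← hQ3 r hr]
        congr 1
        congr 1
        rw [← Finset.sum_attach s (fun j => p (Function.update I l j) r * c I l j)]
        exact Finset.sum_congr rfl fun j _ => by rw [← hF3 j.1 j.2 r hr]; ring
      rw [e1, hkey r hr]
      field_simp [hc I l (J l)]
      ring
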